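/- Let a, b ∈ ℂ with b ≠ 0. Let w₁, w₂ ∈ ℂ satisfy w₁² + (a − 2b)w₁ + 1 = 0 and w₂² + (a + 2b)w₂ + 1 = 0, set l₁ = w₂/w₁ and l₂ = w₁w₂, and assume l₁ ≠ 1 and l₂ ≠ 1. Define j_i = 256(1 − l_i + l_i²)³ / (l_i²(1 − l_i)²) for i = 1, 2. Then j₁j₂ = 4096(a² − 3 + 12b²)³ / b² and (j₁ − 1728)(j₂ − 1728) = 1024 a² (2a² − 9 − 72b²)² / b². -/

import Mathlib

set_option maxHeartbeats 4000000 in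
/-- Proposition 4.1 of the paper: relations between the `j`-invariants of the two
elliptic curves `E_i : y² = x(x−1)(x−l_i)` attached to the quotient of
`S_{a,b} : Y² = X³ + (t + 1/t + a)X² + b²X` by the translation by `(0,0)`. -/
theorem stmt6 (a b w1 w2 l1 l2 j1 j2 : ℂ) (hb : b ≠ 0)
    (hw1 : w1 ^ 2 + (a - 2 * b) * w1 + 1 = 0)
    (hw2 : w2 ^ 2 + (a + 2 * b) * w2 + 1 = 0)
    (hl1 : l1 = w2 / w1) (hl2 : l2 = w1 * w2)
    (hl1' : l1 ≠ 1) (hl2' : l2 ≠ 1)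
    (hj1 : j1 = 256 * (1 - l1 + l1 ^ 2) ^ 3 / (l1 ^ 2 * (1 - l1) ^ 2))
    (hj2 : j2 = 256 * (1 - l2 + l2 ^ 2) ^ 3 / (l2 ^ 2 * (1 - l2) ^ 2)) :
    j1 * j2 = 4096 * (a ^ 2 - 3 + 12 * b ^ 2) ^ 3 / b ^ 2 ∧
    (j1 - 1728) * (j2 - 1728)
      = 1024 * a ^ 2 * (2 * a ^ 2 - 9 - 72 * b ^ 2) ^ 2 / b ^ 2 := by
  have hw1' : w1 ≠ 0 := by
    intro h; rw [h] at hw1; norm_num at hw1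
  have hw2' : w2 ≠ 0 := by
    intro h; rw [h] at hw2; norm_num at hw2
  have h1 : w2 / w1 ≠ 1 := hl1 ▸ hl1'
  have h2 : w1 * w2 ≠ 1 := hl2 ▸ hl2'
  have h1' : w1 - w2 ≠ 0 := by
    intro h
    apply h1
    rw [sub_eq_zero] at h
    rw [← h, div_self hw1']
  have h2' : w1 * w2 - 1 ≠ 0 := sub_ne_zero.mpr h2
  have h2'' : 1 - w1 * w2 ≠ 0 := fun h => h2' (by linear_combination -h)
  have ha' : a = -((w1 + w2) * (w1 * w2 + 1)) / (2 * (w1 * w2)) := by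
    field_simp
    linear_combination w2 * hw1 + w1 * hw2
  have hb' : b = (w1 - w2) * (w1 * w2 - 1) / (4 * (w1 * w2)) := by
    field_simp
    linear_combination -w2 * hw1 + w1 * hw2
  have hj1' : j1 = 256 * (w1 ^ 2 - w1 * w2 + w2 ^ 2) ^ 3
      / (w1 ^ 2 * w2 ^ 2 * (w1 - w2) ^ 2) := by
    rw [hj1, hl1]
    rw [div_eq_div_iff]
    · field_simp
    · intro h
      rcases mul_eq_zero.mp h with h | h
      · exact hw2' (by simpa [div_eq_zero_iff, hw1'] using pow_eq_zero_iff two_ne_zero |>.mp h)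
      · have := pow_eq_zero_iff two_ne_zero |>.mp h
        have : w2 / w1 = 1 := by linear_combination -this
        exact absurd this h1
    · intro h
      rcases mul_eq_zero.mp h with h | h
      · rcases mul_eq_zero.mp h with h | h
        · exact hw1' (pow_eq_zero_iff two_ne_zero |>.mp h)
        · exact hw2' (pow_eq_zero_iff two_ne_zero |>.mp h)
      · exact h1' (pow_eq_zero_iff two_ne_zero |>.mp h)
  have hj2' : j2 = 256 * (1 - w1 * w2 + (w1 * w2) ^ 2) ^ 3
      / ((w1 * w2) ^ 2 * (1 - w1 * w2) ^ 2) := by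
    rw [hj2, hl2]
  have hA2 : a ^ 2 = ((w1 + w2) * (w1 * w2 + 1)) ^ 2 / (4 * (w1 * w2) ^ 2) := by
    rw [ha', div_pow, neg_sq]
    congr 1
    ring
  have hB2 : b ^ 2 = ((w1 - w2) * (w1 * w2 - 1)) ^ 2 / (16 * (w1 * w2) ^ 2) := by
    rw [hb', div_pow]
    congr 1
    ring
  have hu : (w1 * w2) ≠ 0 := mul_ne_zero hw1' hw2'
  have hP : a ^ 2 - 3 + 12 * b ^ 2
      = (w1 ^ 2 - w1 * w2 + w2 ^ 2) * (1 - w1 * w2 + (w1 * w2) ^ 2) / (w1 * w2) ^ 2 := by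
    rw [hA2, hB2]
    field_simp
    ring
  have hQ : 2 * a ^ 2 - 9 - 72 * b ^ 2
      = (((w1 + w2) * (w1 * w2 + 1)) ^ 2 - 18 * (w1 * w2) ^ 2
          - 9 * ((w1 - w2) * (w1 * w2 - 1)) ^ 2) / (2 * (w1 * w2) ^ 2) := by
    rw [hA2, hB2]
    field_simp
    ring
  have hD1 : w1 ^ 2 * w2 ^ 2 * (w1 - w2) ^ 2 ≠ 0 := by
    exact mul_ne_zero (mul_ne_zero (pow_ne_zero _ hw1') (pow_ne_zero _ hw2')) (pow_ne_zero _ h1')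
  have hD2 : (w1 * w2) ^ 2 * (1 - w1 * w2) ^ 2 ≠ 0 :=
    mul_ne_zero (pow_ne_zero _ hu) (pow_ne_zero _ h2'')
  have hBne : ((w1 - w2) * (w1 * w2 - 1)) ^ 2 ≠ 0 := pow_ne_zero _ (mul_ne_zero h1' h2')
  rw [hj1', hj2', hP, hQ, hA2, hB2]
  constructor
  · rw [div_mul_div_comm, div_pow, div_div_eq_mul_div, div_eq_div_iff (mul_ne_zero hD1 hD2) hBne]
    field_simp
    ring
  · rw [div_sub' hD1, div_sub' hD2, div_mul_div_comm, div_pow,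
      div_div_eq_mul_div, div_eq_div_iff (mul_ne_zero hD1 hD2) hBne]
    field_simp
    ring
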